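/- Let G be a finite group acting by ring automorphisms on a commutative ring R, such that the order |G| of G is invertible in R. Let R^G denote the subring of G-fixed elements and let S be a commutative R^G-algebra. Let G act on the tensor product R ⊗_{R^G} S through the first factor (g • (r ⊗ s) = (g • r) ⊗ s). Then the natural ring homomorphism S → R ⊗_{R^G} S sending s to 1 ⊗ s is injective, takes values in the G-fixed subring (R ⊗_{R^G} S)^G, and is a bijection onto (R ⊗_{R^G} S)^G. -/
import Mathlib

open scoped TensorProduct

def fixedSubring (G R : Type*) [Group G] [CommRing R] [MulSemiringAction G R] :
    Subring R where
  carrier := {r | ∀ g : G, g • r = r}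
  mul_mem' := fun {x y} hx hy g => by rw [smul_mul', hx g, hy g]
  one_mem' := fun g => smul_one g
  add_mem' := fun {x y} hx hy g => by rw [smul_add, hx g, hy g]
  zero_mem' := fun g => smul_zero g
  neg_mem' := fun {x} hx g => by rw [smul_neg, hx g]

def fixedSubring.actAlgHom {G R : Type*} [Group G] [CommRing R] [MulSemiringAction G R]
    (g : G) : R →ₐ[fixedSubring G R] R :=
  { MulSemiringAction.toRingHom G R g with
    commutes' := fun b => b.2 g }

section Aux
variable {G R : Type*} [Group G] [Fintype G] [CommRing R] [MulSemiringAction G R]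

lemma trace_fixed (r : R) (g : G) :
    g • (∑ h : G, h • r) = ∑ h : G, h • r := by
  rw [Finset.smul_sum]
  exact Fintype.sum_bijective (g * ·) (Group.mulLeft_bijective g)
    _ _ (fun h => (mul_smul g h r).symm)

omit [Fintype G] in
lemma smul_natCast' (g : G) (n : ℕ) : g • ((n : R)) = (n : R) :=
  map_natCast (MulSemiringAction.toRingHom G R g) n

lemma inv_fixed (v : Rˣ) (hv : (v : R) = (Fintype.card G : R)) (g : G) :
    g • ((↑v⁻¹ : R)) = (↑v⁻¹ : R) := by
  have h1 : (g • (↑v⁻¹ : R)) * (Fintype.card G : R) = 1 := by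
    rw [← smul_natCast' g, ← smul_mul', ← hv, v.inv_mul, smul_one]
  calc g • (↑v⁻¹ : R) = (g • (↑v⁻¹ : R)) * ((Fintype.card G : R) * ↑v⁻¹) := by
        rw [← hv, v.mul_inv, mul_one]
    _ = ((g • (↑v⁻¹ : R)) * (Fintype.card G : R)) * ↑v⁻¹ := by ring
    _ = ↑v⁻¹ := by rw [h1, one_mul]

/-- The Reynolds operator `r ↦ |G|⁻¹ ∑ g • r` as a linear map `R →ₗ[R^G] R^G`. -/
def reynolds (v : Rˣ) (hv : (v : R) = (Fintype.card G : R)) :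
    R →ₗ[fixedSubring G R] fixedSubring G R where
  toFun r := ⟨(↑v⁻¹ : R) * ∑ h : G, h • r, fun g => by
    rw [smul_mul', inv_fixed v hv, trace_fixed]⟩
  map_add' x y := by
    ext
    simp only [Subring.coe_add]
    rw [← mul_add, ← Finset.sum_add_distrib]
    simp [smul_add]
  map_smul' c x := by
    ext
    simp only [RingHom.id_apply]
    show (↑v⁻¹ : R) * ∑ h : G, h • ((↑c : R) * x) = ↑c * ((↑v⁻¹ : R) * ∑ h : G, h • x)
    have : ∀ h : G, h • ((↑c : R) * x) = ↑c * h • x := fun h => by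
      rw [smul_mul', c.2 h]
    simp only [this, ← Finset.mul_sum]
    ring

lemma reynolds_one (v : Rˣ) (hv : (v : R) = (Fintype.card G : R)) :
    reynolds v hv (1 : R) = 1 := by
  ext
  show (↑v⁻¹ : R) * ∑ h : G, h • (1 : R) = 1
  simp only [smul_one, Finset.sum_const, Finset.card_univ, nsmul_eq_mul, mul_one]
  rw [← hv, v.inv_mul]

end Aux

set_option maxHeartbeats 1000000 in
theorem tensor_fixed_points_of_tame_action
    {G R S : Type*} [Group G] [Fintype G] [CommRing R] [MulSemiringAction G R]
    [CommRing S] [Algebra (fixedSubring G R) S]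
    (hu : IsUnit ((Fintype.card G : R))) :
    Function.Injective
      (Algebra.TensorProduct.includeRight :
        S →ₐ[fixedSubring G R] R ⊗[fixedSubring G R] S) ∧
    Set.range
      (Algebra.TensorProduct.includeRight :
        S →ₐ[fixedSubring G R] R ⊗[fixedSubring G R] S) =
      {x : R ⊗[fixedSubring G R] S | ∀ g : G,
        Algebra.TensorProduct.map (fixedSubring.actAlgHom g)
          (AlgHom.id (fixedSubring G R) S) x = x} := by
  obtain ⟨v, hv⟩ := hu
  set e := reynolds v hv with he
  set ψ : R ⊗[fixedSubring G R] S →ₗ[fixedSubring G R] S :=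
    TensorProduct.lift ((LinearMap.lsmul (fixedSubring G R) S).comp e) with hψ
  have hψ_tmul : ∀ (r : R) (s : S), ψ (r ⊗ₜ[fixedSubring G R] s) = e r • s :=
    fun r s => TensorProduct.lift.tmul r s
  have hψ_inc : ∀ s : S, ψ ((Algebra.TensorProduct.includeRight :
      S →ₐ[fixedSubring G R] R ⊗[fixedSubring G R] S) s) = s := fun s => by
    rw [Algebra.TensorProduct.includeRight_apply, hψ_tmul, reynolds_one, one_smul]
  have hinj : Function.Injective (Algebra.TensorProduct.includeRight :
      S →ₐ[fixedSubring G R] R ⊗[fixedSubring G R] S) := fun a b h => by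
    have := congrArg ψ h
    rwa [hψ_inc, hψ_inc] at this
  refine ⟨hinj, ?_⟩
  ext x
  constructor
  · rintro ⟨s, rfl⟩ g
    rw [Algebra.TensorProduct.includeRight_apply, Algebra.TensorProduct.map_tmul,
      map_one, AlgHom.id_apply]
  · intro hx
    have hact : ∀ (g : G) (r : R), fixedSubring.actAlgHom g r = g • r := fun _ _ => rfl
    have key : ∀ y : R ⊗[fixedSubring G R] S,
        (Algebra.TensorProduct.includeRight :
          S →ₐ[fixedSubring G R] R ⊗[fixedSubring G R] S) (ψ y) =
        ((↑v⁻¹ : R) ⊗ₜ[fixedSubring G R] (1 : S)) * ∑ g : G,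
          Algebra.TensorProduct.map (fixedSubring.actAlgHom g)
            (AlgHom.id (fixedSubring G R) S) y := by
      intro y
      induction y using TensorProduct.induction_on with
      | zero => simp
      | tmul r s =>
        rw [hψ_tmul, Algebra.TensorProduct.includeRight_apply]
        have h1 : (1 : R) ⊗ₜ[fixedSubring G R] (e r • s) =
            ((↑(e r) : R)) ⊗ₜ[fixedSubring G R] s := by
          rw [← TensorProduct.smul_tmul]
          congr 1
          rw [Algebra.smul_def, mul_one]
          rfl
        rw [h1]
        have h2 : ∀ g : G, Algebra.TensorProduct.map (fixedSubring.actAlgHom g)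
            (AlgHom.id (fixedSubring G R) S) (r ⊗ₜ[fixedSubring G R] s) =
            (g • r) ⊗ₜ[fixedSubring G R] s := fun g => by
          rw [Algebra.TensorProduct.map_tmul, hact, AlgHom.id_apply]
        simp only [h2, ← TensorProduct.sum_tmul, Algebra.TensorProduct.tmul_mul_tmul, one_mul]
        rfl
      | add a b ha hb =>
        simp only [map_add, Finset.sum_add_distrib, mul_add, ha, hb]
    have hsum : ∑ g : G, Algebra.TensorProduct.map (fixedSubring.actAlgHom g)
        (AlgHom.id (fixedSubring G R) S) x = (Fintype.card G) • x := by
      simp only [Set.mem_setOf_eq] at hx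
      simp only [hx, Finset.sum_const, Finset.card_univ]
    have hkey := key x
    rw [hsum] at hkey
    refine ⟨ψ x, ?_⟩
    rw [hkey, mul_smul_comm, ← smul_mul_assoc, TensorProduct.smul_tmul',
      nsmul_eq_mul, ← hv, v.mul_inv, ← Algebra.TensorProduct.one_def, one_mul]
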